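/- Let D be a semilocal Prüfer domain with standard decomposition Θ, let Δ ⊆ SkOver(D), let T ∈ Θ and let ⋆ ∈ SStar_Δ(D). Then the map Γ_T(⋆) : Δ(T) → FStar(T), A ↦ λ_{A,T}(⋆|_{Frac(A)}), is order-preserving: if A ⊆ B are in Δ(T), then λ_{A,T}(⋆|_{Frac(A)}) ≤ λ_{B,T}(⋆|_{Frac(B)}). -/

import Mathlib

/- Common background: Prüfer domains, semistar and (fractional) star operations,
standard decomposition, skeleton, supports, `hiSpec`, the rings `Z(P)`,
and the invariants `ω` and `ε`, following Spirito,
"Semistar operations on semilocal Prüfer domains". -/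

set_option linter.unusedSectionVars false
set_option maxHeartbeats 1000000

open Pointwise

noncomputable section

namespace Paper

variable (D : Type*) [CommRing D] [IsDomain D]
variable (K : Type*) [Field K] [Algebra D K] [IsFractionRing D K]

/-- The localization of `D` at a prime ideal `P`, viewed as an overring of `D`
inside its quotient field `K`. -/
def locAt (P : Ideal D) (hP : P.IsPrime) : Subalgebra D K :=
  Localization.subalgebra K (@Ideal.primeCompl D _ P hP)
    (fun _ hx => mem_nonZeroDivisors_of_ne_zero fun h => hx (h ▸ P.zero_mem))

/-- A Prüfer domain: every localization at a prime ideal is a valuation domain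
(any two elements are comparable w.r.t. divisibility). -/
def IsPrufer : Prop :=
  ∀ (P : Ideal D) (hP : P.IsPrime), ∀ x y : locAt D K P hP, ∃ z, x * z = y ∨ y * z = x

/-- A semilocal ring: finitely many maximal ideals. -/
def IsSemilocal : Prop := {I : Ideal D | I.IsMaximal}.Finite

/-- Two ideals are dependent if some nonzero prime ideal is contained in both. -/
def Dependent (M N : Ideal D) : Prop :=
  ∃ P : Ideal D, P.IsPrime ∧ P ≠ ⊥ ∧ P ≤ M ∧ P ≤ N

/-- The member of the standard decomposition corresponding to the dependence class
of the maximal ideal `M`: the intersection of the localizations of `D` at the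
maximal ideals dependent on `M`. -/
def TOf (M : Ideal D) : Subalgebra D K :=
  sInf {A | ∃ (N : Ideal D) (hN : N.IsMaximal), Dependent D M N ∧ A = locAt D K N hN.isPrime}

/-- The standard decomposition of `D`. -/
def stdDecomp : Set (Subalgebra D K) :=
  {T | ∃ M : Ideal D, M.IsMaximal ∧ T = TOf D K M}

/-- The skeleton of `Over(D)`: all intersections of subsets of the standard
decomposition (including the empty intersection `K` and the total one `D`). -/
def SkOver : Set (Subalgebra D K) :=
  {A | ∃ S ⊆ stdDecomp D K, A = sInf S}

/-- `I` is a fractional ideal of the overring `A` of `D`: it is an `A`-submodule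
of `K` and `dI ⊆ A` for some nonzero `d ∈ K`. -/
def IsFracOf (A : Subalgebra D K) (I : Submodule D K) : Prop :=
  (∀ a ∈ A, ∀ x ∈ I, a * x ∈ I) ∧ ∃ d : K, d ≠ 0 ∧ ∀ x ∈ I, d * x ∈ A

end Paper

namespace Paper

/-- A semistar operation on a domain `R` with quotient field `K`: an extensive,
order-preserving, idempotent self-map of the set of `R`-submodules of `K` such
that `(xI)^⋆ = x·I^⋆` for every nonzero `x ∈ K`. -/
structure Semistar (R : Type*) [CommRing R] (K : Type*) [Field K] [Algebra R K] where
  toFun : Submodule R K → Submodule R K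
  le_star' : ∀ I, I ≤ toFun I
  mono' : ∀ ⦃I J⦄, I ≤ J → toFun I ≤ toFun J
  idem' : ∀ I, toFun (toFun I) = toFun I
  smul' : ∀ (x : K), x ≠ 0 → ∀ I,
    toFun (Submodule.span R {x} * I) = Submodule.span R {x} * toFun I

namespace Semistar

variable {R : Type*} [CommRing R] {K : Type*} [Field K] [Algebra R K]

theorem ext' {s t : Semistar R K} (h : s.toFun = t.toFun) : s = t := by
  cases s; cases t; cases h; rfl

instance : PartialOrder (Semistar R K) where
  le s t := ∀ I, s.toFun I ≤ t.toFun I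
  le_refl _ _ := le_rfl
  le_trans _ _ _ hab hbc I := (hab I).trans (hbc I)
  le_antisymm _ _ h h' := ext' (funext fun I => le_antisymm (h I) (h' I))

end Semistar

/-- The identity semistar operation `d`. -/
def dOp (R : Type*) [CommRing R] (K : Type*) [Field K] [Algebra R K] : Semistar R K where
  toFun I := I
  le_star' _ := le_rfl
  mono' _ _ h := h
  idem' _ := rfl
  smul' _ _ _ := rfl

end Paper

namespace Paper

variable (D : Type*) [CommRing D] [IsDomain D]
variable (K : Type*) [Field K] [Algebra D K] [IsFractionRing D K]

/-- A fractional star operation on an overring `A` of `D` (inside `K`): a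
semistar-like closure operation defined on the fractional ideals of `A`.
In particular `FracStar D K ⊥` is the set of fractional star operations on `D`. -/
structure FracStar (A : Subalgebra D K) where
  toFun : {I : Submodule D K // IsFracOf D K A I} → {I : Submodule D K // IsFracOf D K A I}
  le_star' : ∀ I, I.1 ≤ (toFun I).1
  mono' : ∀ I J, I.1 ≤ J.1 → (toFun I).1 ≤ (toFun J).1
  idem' : ∀ I, toFun (toFun I) = toFun I
  smul' : ∀ (x : K), x ≠ 0 → ∀ I J, J.1 = Submodule.span D {x} * I.1 →
    (toFun J).1 = Submodule.span D {x} * (toFun I).1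

namespace FracStar

variable {D K} {A : Subalgebra D K}

theorem ext' {s t : FracStar D K A} (h : s.toFun = t.toFun) : s = t := by
  cases s; cases t; cases h; rfl

instance : PartialOrder (FracStar D K A) where
  le s t := ∀ I, (s.toFun I).1 ≤ (t.toFun I).1
  le_refl _ _ := le_rfl
  le_trans _ _ _ hab hbc I := (hab I).trans (hbc I)
  le_antisymm _ _ h h' := ext' (funext fun I => Subtype.ext (le_antisymm (h I) (h' I)))

end FracStar

/-- A fractional star operation on the overring `A` is a *star operation* if it
closes `A` itself. -/
def FracStar.IsStarOp {A : Subalgebra D K} (f : FracStar D K A) : Prop :=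
  ∀ h : IsFracOf D K A (Subalgebra.toSubmodule A),
    (f.toFun ⟨Subalgebra.toSubmodule A, h⟩).1 = Subalgebra.toSubmodule A

/-- The support of a semistar operation on `D`: the elements `A` of the skeleton
such that `A^⋆` is a fractional ideal of `A`. -/
def supp (s : Semistar D K) : Set (Subalgebra D K) :=
  {A | A ∈ SkOver D K ∧ IsFracOf D K A (s.toFun (Subalgebra.toSubmodule A))}

/-- The image of an ideal of `D` inside `K`. -/
def idealToK (P : Ideal D) : Submodule D K := Submodule.map (Algebra.linearMap D K) P

end Paper

namespace Paper

/-- An abstract fractional star operation on a commutative ring `A`, acting on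
the fractional ideals of `A` inside its fraction ring. -/
structure AFracStar (A : Type*) [CommRing A] where
  toFun : FractionalIdeal (nonZeroDivisors A) (FractionRing A) →
    FractionalIdeal (nonZeroDivisors A) (FractionRing A)
  le_star' : ∀ I, I ≤ toFun I
  mono' : ∀ ⦃I J⦄, I ≤ J → toFun I ≤ toFun J
  idem' : ∀ I, toFun (toFun I) = toFun I
  smul' : ∀ (x : FractionRing A), x ≠ 0 → ∀ I,
    toFun (FractionalIdeal.spanSingleton (nonZeroDivisors A) x * I) =
      FractionalIdeal.spanSingleton (nonZeroDivisors A) x * toFun I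

namespace AFracStar

variable {A : Type*} [CommRing A]

theorem ext' {s t : AFracStar A} (h : s.toFun = t.toFun) : s = t := by
  cases s; cases t; cases h; rfl

instance : PartialOrder (AFracStar A) where
  le s t := ∀ I, s.toFun I ≤ t.toFun I
  le_refl _ _ := le_rfl
  le_trans _ _ _ hab hbc I := (hab I).trans (hbc I)
  le_antisymm _ _ h h' := ext' (funext fun I => le_antisymm (h I) (h' I))

end AFracStar

/-- Abstract star operations on `A`: fractional star operations closing `A`. -/
def AStar (A : Type*) [CommRing A] : Type _ := {s : AFracStar A // s.toFun 1 = 1}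

instance (A : Type*) [CommRing A] : PartialOrder (AStar A) :=
  inferInstanceAs (PartialOrder {s : AFracStar A // s.toFun 1 = 1})

end Paper

namespace Paper

variable (D : Type*) [CommRing D] [IsDomain D]

/-- `P` is a branching point of `Spec(D)`: the infimum (among the primes) of a
family of pairwise incomparable primes not containing `P`. -/
def IsBranchPoint (P : Ideal D) : Prop :=
  ∃ S : Set (Ideal D), (∀ Q ∈ S, Q.IsPrime) ∧
    (S.Pairwise fun Q₁ Q₂ => ¬Q₁ ≤ Q₂ ∧ ¬Q₂ ≤ Q₁) ∧ P ∉ S ∧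
    (∀ Q ∈ S, P ≤ Q) ∧ ∀ P' : Ideal D, P'.IsPrime → (∀ Q ∈ S, P' ≤ Q) → P' ≤ P

/-- The homeomorphically irreducible tree underlying `Spec(D)`: the zero ideal,
the maximal ideals and the branching points, ordered by inclusion. -/
def hiSpec : Set (Ideal D) :=
  {P | P.IsPrime ∧ (P = ⊥ ∨ P.IsMaximal ∨ IsBranchPoint D P)}

/-- `Q` is the element of `hiSpec D` directly below `P`. -/
def DirectlyBelow (Q P : Ideal D) : Prop :=
  Q ∈ hiSpec D ∧ P ∈ hiSpec D ∧ Q < P ∧ ∀ R ∈ hiSpec D, Q < R → ¬R < P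

/-- The localization of `D` at the prime ideal `P`, as an abstract ring. -/
abbrev locRing (P : Ideal D) (hP : P.IsPrime) : Type _ :=
  Localization (@Ideal.primeCompl D _ P hP)

/-- The valuation ring `Z(P) = D_P / Q·D_P`. -/
abbrev Zring (P Q : Ideal D) (hP : P.IsPrime) : Type _ :=
  locRing D P hP ⧸ Ideal.map (algebraMap D (locRing D P hP)) Q

/-- `ω(P) = |FStar(Z(P))|`, where `Q` is the element of `hiSpec D` directly
below `P`. -/
def omegaAt (P Q : Ideal D) (hP : P.IsPrime) : ℕ :=
  Nat.card (AFracStar (Zring D P Q hP))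

open Classical in
/-- `ε(P) = |Star(D_P)| ∈ {1,2}` for a (nonzero) prime `P`. -/
def epsilonOf (A : Ideal D) : ℕ :=
  if h : A.IsPrime then Nat.card (AStar (locRing D A h)) else 0

end Paper

namespace Paper

theorem mem_hiSpec_prime {D : Type*} [CommRing D] [IsDomain D] {P : Ideal D}
    (h : P ∈ hiSpec D) : P.IsPrime := h.1

theorem maximal_mem_hiSpec {D : Type*} [CommRing D] [IsDomain D] {M : Ideal D}
    (h : M.IsMaximal) : M ∈ hiSpec D := ⟨h.isPrime, Or.inr (Or.inl h)⟩

end Paper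


namespace Paper

section Statement3Aux

variable {D : Type*} [CommRing D] [IsDomain D]
variable {K : Type*} [Field K] [Algebra D K] [IsFractionRing D K]

lemma mem_locAt_iff {P : Ideal D} (hP : P.IsPrime) {x : K} :
    x ∈ locAt D K P hP ↔
      ∃ a s : D, s ∉ P ∧ x = algebraMap D K a * (algebraMap D K s)⁻¹ := by
  constructor
  · rintro ⟨a, s, hs, rfl⟩
    exact ⟨a, s, hs, by rw [IsFractionRing.mk'_eq_div, div_eq_mul_inv]⟩
  · rintro ⟨a, s, hs, rfl⟩
    exact ⟨a, s, hs, by rw [IsFractionRing.mk'_eq_div, div_eq_mul_inv]⟩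

lemma algebraMap_ne_zero {d : D} (hd : d ≠ 0) : algebraMap D K d ≠ 0 := fun h =>
  hd (IsFractionRing.injective D K (by rw [h, map_zero]))

lemma inv_mem_locAt {P : Ideal D} (hP : P.IsPrime) {s : D} (hs : s ∉ P) :
    (algebraMap D K s)⁻¹ ∈ locAt D K P hP :=
  (mem_locAt_iff hP).mpr ⟨1, s, hs, by rw [map_one, one_mul]⟩

/-- Localization of a module at a prime, elementwise description. -/
lemma mem_mul_locAt_iff {P : Ideal D} (hP : P.IsPrime) (F : Submodule D K) {x : K} :
    x ∈ F * Subalgebra.toSubmodule (locAt D K P hP) ↔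
      ∃ s : D, s ∉ P ∧ algebraMap D K s * x ∈ F := by
  constructor
  · intro hx
    refine Submodule.mul_induction_on hx ?_ ?_
    · rintro f hf u hu
      obtain ⟨a, t, ht, rfl⟩ := (mem_locAt_iff hP).mp hu
      refine ⟨t, ht, ?_⟩
      have ht0 : algebraMap D K t ≠ 0 := algebraMap_ne_zero (fun h => ht (h ▸ P.zero_mem))
      have : algebraMap D K t * (f * (algebraMap D K a * (algebraMap D K t)⁻¹)) = a • f := by
        rw [Algebra.smul_def]; field_simp
      rw [this]; exact F.smul_mem a hf
    · rintro x y ⟨s, hs, hsx⟩ ⟨t, ht, hty⟩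
      refine ⟨s * t, fun h => ((hP.mem_or_mem h).elim hs ht), ?_⟩
      have : algebraMap D K (s * t) * (x + y)
          = t • (algebraMap D K s * x) + s • (algebraMap D K t * y) := by
        simp only [Algebra.smul_def, map_mul]; ring
      rw [this]; exact F.add_mem (F.smul_mem _ hsx) (F.smul_mem _ hty)
  · rintro ⟨s, hs, hsx⟩
    have hs0 : algebraMap D K s ≠ 0 := algebraMap_ne_zero (fun h => hs (h ▸ P.zero_mem))
    have := Submodule.mul_mem_mul hsx
      (show (algebraMap D K s)⁻¹ ∈ Subalgebra.toSubmodule (locAt D K P hP) from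
        inv_mem_locAt hP hs)
    rwa [mul_comm (algebraMap D K s) x, mul_assoc, mul_inv_cancel₀ hs0, mul_one] at this

/-- A submodule is the intersection of its localizations at maximal ideals. -/
lemma mem_of_forall_locAt {F : Submodule D K} {x : K}
    (h : ∀ (N : Ideal D) (hN : N.IsMaximal),
      x ∈ F * Subalgebra.toSubmodule (locAt D K N hN.isPrime)) : x ∈ F := by
  let Ix : Ideal D :=
    { carrier := {d | algebraMap D K d * x ∈ F}
      add_mem' := fun ha hb => by simpa [map_add, add_mul] using F.add_mem ha hb
      zero_mem' := by simp
      smul_mem' := fun c d hd => by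
        simpa [smul_eq_mul, map_mul, mul_assoc, Algebra.smul_def] using F.smul_mem c hd }
  by_cases h1 : Ix = ⊤
  · have h2 : (1 : D) ∈ Ix := h1 ▸ Submodule.mem_top
    have h3 : algebraMap D K 1 * x ∈ F := h2
    simpa using h3
  · obtain ⟨N, hN, hle⟩ := Ideal.exists_le_maximal Ix h1
    obtain ⟨s, hs, hsx⟩ := (mem_mul_locAt_iff hN.isPrime F).mp (h N hN)
    exact absurd (hle hsx) hs

/-- In a Prüfer domain, primes below a common prime are comparable. -/
lemma primes_comparable (hPruf : IsPrufer D K) {N P Q : Ideal D} (hN : N.IsPrime)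
    (hP : P.IsPrime) (hQ : Q.IsPrime) (hPN : P ≤ N) (hQN : Q ≤ N) : P ≤ Q ∨ Q ≤ P := by
  by_contra hcon
  push_neg at hcon
  obtain ⟨hPQ, hQP⟩ := hcon
  obtain ⟨p, hpP, hpQ⟩ := SetLike.not_le_iff_exists.mp hPQ
  obtain ⟨q, hqQ, hqP⟩ := SetLike.not_le_iff_exists.mp hQP
  set xp : locAt D K N hN := ⟨algebraMap D K p, Subalgebra.algebraMap_mem _ p⟩
  set xq : locAt D K N hN := ⟨algebraMap D K q, Subalgebra.algebraMap_mem _ q⟩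
  obtain ⟨z, hz⟩ := hPruf N hN xp xq
  obtain ⟨a, t, ht, hzval⟩ := (mem_locAt_iff hN).mp z.2
  have ht0 : algebraMap D K t ≠ 0 := algebraMap_ne_zero (fun h => ht (h ▸ N.zero_mem))
  rcases hz with hz | hz
  · have hz' : algebraMap D K p * (z : K) = algebraMap D K q := congrArg Subtype.val hz
    rw [hzval] at hz'
    have : algebraMap D K (p * a) = algebraMap D K (q * t) := by
      rw [map_mul, map_mul]
      field_simp at hz'
      linear_combination hz'
    have heq : p * a = q * t := IsFractionRing.injective D K this
    have : q * t ∈ P := heq ▸ Ideal.mul_mem_right a P hpP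
    rcases hP.mem_or_mem this with h | h
    · exact hqP h
    · exact ht (hPN h)
  · have hz' : algebraMap D K q * (z : K) = algebraMap D K p := congrArg Subtype.val hz
    rw [hzval] at hz'
    have : algebraMap D K (q * a) = algebraMap D K (p * t) := by
      rw [map_mul, map_mul]
      field_simp at hz'
      linear_combination hz'
    have heq : q * a = p * t := IsFractionRing.injective D K this
    have : p * t ∈ Q := heq ▸ Ideal.mul_mem_right a Q hqQ
    rcases hQ.mem_or_mem this with h | h
    · exact hpQ h
    · exact ht (hQN h)

lemma indep_of_dep_notdep (hPruf : IsPrufer D K) {M₀ N N' : Ideal D} (hN : N.IsPrime)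
    (hdep : Dependent D M₀ N) (hnotdep : ¬ Dependent D M₀ N') :
    ¬ Dependent D N N' := by
  rintro ⟨P, hP, hP0, hPN, hPN'⟩
  obtain ⟨Q, hQ, hQ0, hQM, hQN⟩ := hdep
  rcases primes_comparable (K := K) hPruf hN hP hQ hPN hQN with h | h
  · exact hnotdep ⟨P, hP, hP0, h.trans hQM, hPN'⟩
  · exact hnotdep ⟨Q, hQ, hQ0, hQM, h.trans hPN'⟩

/-- The product of two subalgebras of `K`, as a subalgebra. -/
def mulSubalg (C₁ C₂ : Subalgebra D K) : Subalgebra D K :=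
  Submodule.toSubalgebra (Subalgebra.toSubmodule C₁ * Subalgebra.toSubmodule C₂)
    (by
      have := Submodule.mul_mem_mul
        (show (1 : K) ∈ Subalgebra.toSubmodule C₁ from C₁.one_mem)
        (show (1 : K) ∈ Subalgebra.toSubmodule C₂ from C₂.one_mem)
      simpa using this)
    (fun a b ha hb => by
      have h : (Subalgebra.toSubmodule C₁ * Subalgebra.toSubmodule C₂) *
          (Subalgebra.toSubmodule C₁ * Subalgebra.toSubmodule C₂) =
          Subalgebra.toSubmodule C₁ * Subalgebra.toSubmodule C₂ := by
        rw [mul_mul_mul_comm, (Subalgebra.isIdempotentElem_toSubmodule _).eq, (Subalgebra.isIdempotentElem_toSubmodule _).eq]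
      exact h ▸ Submodule.mul_mem_mul ha hb)

lemma mem_mulSubalg_left {C₁ C₂ : Subalgebra D K} {x : K} (hx : x ∈ C₁) :
    x ∈ mulSubalg C₁ C₂ := by
  have := Submodule.mul_mem_mul
    (show x ∈ Subalgebra.toSubmodule C₁ from hx)
    (show (1 : K) ∈ Subalgebra.toSubmodule C₂ from C₂.one_mem)
  show x ∈ Subalgebra.toSubmodule C₁ * Subalgebra.toSubmodule C₂; simpa using this

lemma mem_mulSubalg_right {C₁ C₂ : Subalgebra D K} {x : K} (hx : x ∈ C₂) :
    x ∈ mulSubalg C₁ C₂ := by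
  have := Submodule.mul_mem_mul
    (show (1 : K) ∈ Subalgebra.toSubmodule C₁ from C₁.one_mem)
    (show x ∈ Subalgebra.toSubmodule C₂ from hx)
  show x ∈ Subalgebra.toSubmodule C₁ * Subalgebra.toSubmodule C₂; simpa using this

lemma mulSubalg_eq_top (C₁ C₂ : Subalgebra D K)
    (h : ∀ P : Ideal D, P.IsPrime → P ≠ ⊥ →
      (∀ p : D, p ∈ P → p ≠ 0 →
        (algebraMap D K p)⁻¹ ∉ C₁ ∧ (algebraMap D K p)⁻¹ ∉ C₂) → False) :
    Subalgebra.toSubmodule C₁ * Subalgebra.toSubmodule C₂ = ⊤ := by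
  set R₀ := mulSubalg C₁ C₂ with hR₀
  have key : ∀ b : D, b ≠ 0 → (algebraMap D K b)⁻¹ ∈ R₀ := by
    intro b hb
    by_contra hbinv
    have hunit : ¬ IsUnit (algebraMap D R₀ b) := by
      rintro ⟨u, hu⟩
      apply hbinv
      have h1 : ((u⁻¹ : R₀ˣ) : R₀) * algebraMap D R₀ b = 1 := by
        rw [← hu]; exact u.inv_mul
      have h2 : (((u⁻¹ : R₀ˣ) : R₀) : K) * algebraMap D K b = 1 := congrArg Subtype.val h1
      have h3 : (((u⁻¹ : R₀ˣ) : R₀) : K) = (algebraMap D K b)⁻¹ :=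
        eq_inv_of_mul_eq_one_left h2
      exact h3 ▸ (((u⁻¹ : R₀ˣ) : R₀)).2
    have hspan : Ideal.span {algebraMap D R₀ b} ≠ ⊤ := fun htop =>
      hunit (Ideal.span_singleton_eq_top.mp htop)
    obtain ⟨M', hM', hle⟩ := Ideal.exists_le_maximal _ hspan
    have hPprime : (M'.comap (algebraMap D R₀)).IsPrime := Ideal.IsPrime.comap _
    have hbP : b ∈ M'.comap (algebraMap D R₀) := hle (Ideal.subset_span rfl)
    have hPbot : M'.comap (algebraMap D R₀) ≠ ⊥ := fun hbot => hb (by simpa [hbot] using hbP)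
    refine h _ hPprime hPbot ?_
    intro p hpP hp0
    have hnu : ¬ IsUnit (algebraMap D R₀ p) := fun hu =>
      hM'.ne_top (Ideal.eq_top_of_isUnit_mem _ hpP hu)
    constructor
    · intro hmem
      refine hnu (IsUnit.of_mul_eq_one ⟨_, mem_mulSubalg_left hmem⟩ ?_)
      refine Subtype.ext ?_
      show algebraMap D K p * (algebraMap D K p)⁻¹ = 1
      exact mul_inv_cancel₀ (algebraMap_ne_zero hp0)
    · intro hmem
      refine hnu (IsUnit.of_mul_eq_one ⟨_, mem_mulSubalg_right hmem⟩ ?_)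
      refine Subtype.ext ?_
      show algebraMap D K p * (algebraMap D K p)⁻¹ = 1
      exact mul_inv_cancel₀ (algebraMap_ne_zero hp0)
  rw [eq_top_iff]
  intro k _
  obtain ⟨a, b, hb, rfl⟩ := IsFractionRing.div_surjective (A := D) k
  have hb0 : b ≠ 0 := nonZeroDivisors.ne_zero hb
  have hdiv : algebraMap D K a / algebraMap D K b
      = algebraMap D K a * (algebraMap D K b)⁻¹ := div_eq_mul_inv _ _
  rw [hdiv]
  exact R₀.mul_mem (R₀.algebraMap_mem a) (key b hb0)

lemma toSubmodule_mul_of_le {C₁ C₂ : Subalgebra D K} (h : C₁ ≤ C₂) :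
    Subalgebra.toSubmodule C₁ * Subalgebra.toSubmodule C₂ = Subalgebra.toSubmodule C₂ := by
  apply le_antisymm
  · exact Submodule.mul_le.mpr (fun a ha b hb => C₂.mul_mem (h ha) hb)
  · intro t ht
    simpa using Submodule.mul_mem_mul
      (show (1 : K) ∈ Subalgebra.toSubmodule C₁ from C₁.one_mem) ht

lemma span_algebraMap_mul_le (x : D) (F : Submodule D K) :
    Submodule.span D {algebraMap D K x} * F ≤ F := by
  refine Submodule.mul_le.mpr ?_
  intro a ha f hf
  obtain ⟨r, rfl⟩ := Submodule.mem_span_singleton.mp ha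
  have h : r • algebraMap D K x * f = (r * x) • f := by
    rw [Algebra.smul_def, Algebra.smul_def, map_mul]
    try ring
  have h2 : (r * x) • f ∈ F := F.smul_mem _ hf
  rwa [h]

lemma le_mul_subalgebra (F : Submodule D K) (C : Subalgebra D K) :
    F ≤ F * Subalgebra.toSubmodule C :=
  fun f hf => by
    simpa using Submodule.mul_mem_mul hf
      (show (1 : K) ∈ Subalgebra.toSubmodule C from C.one_mem)

lemma span_singleton_mul_top {j : K} (hj : j ≠ 0) :
    Submodule.span D {j} * (⊤ : Submodule D K) = ⊤ := by
  rw [eq_top_iff]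
  intro k _
  have h : k = j * (j⁻¹ * k) := by field_simp
  rw [h]
  exact Submodule.mul_mem_mul (Submodule.mem_span_singleton_self j) Submodule.mem_top

end Statement3Aux

end Paper

namespace Paper

/-- For a semistar operation `⋆` with support `Δ` and `T ∈ Θ`, the map
`Γ_T(⋆) : Δ(T) → FStar(T)`, `A ↦ λ_{A,T}(⋆|_{Frac(A)})`, is order-preserving: if
`A ⊆ B` in `Δ(T)` then `λ_{A,T}(⋆|_{Frac(A)}) ≤ λ_{B,T}(⋆|_{Frac(B)})`, i.e. for every
fractional ideal of `T` written both as `I·T` (`I ∈ Frac(A)`) and as `J·T`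
(`J ∈ Frac(B)`), we have `I^⋆·T ⊆ J^⋆·T`. -/
theorem statement3
    (D : Type*) [CommRing D] [IsDomain D]
    (K : Type*) [Field K] [Algebra D K] [IsFractionRing D K]
    (hPruf : IsPrufer D K) (hsl : IsSemilocal D)
    (Δ : Set (Subalgebra D K)) (s : Semistar D K) (hs : supp D K s = Δ)
    (T : Subalgebra D K) (hT : T ∈ stdDecomp D K)
    (A B : Subalgebra D K) (hA : A ∈ Δ) (hB : B ∈ Δ)
    (hAT : A ≤ T) (hBT : B ≤ T) (hAB : A ≤ B)
    (I J : Submodule D K) (hI : IsFracOf D K A I) (hJ : IsFracOf D K B J)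
    (hIJ : I * Subalgebra.toSubmodule T = J * Subalgebra.toSubmodule T) :
    s.toFun I * Subalgebra.toSubmodule T ≤ s.toFun J * Subalgebra.toSubmodule T := by
  classical
  by_cases hJbot : J = ⊥
  · have hIbot : I = ⊥ := by
      have hIle : I ≤ I * Subalgebra.toSubmodule T := le_mul_subalgebra I T
      rw [hIJ, hJbot, Submodule.bot_mul] at hIle
      exact le_bot_iff.mp hIle
    rw [hIbot, hJbot]
  have hBsupp : B ∈ supp D K s := by rw [hs]; exact hB
  obtain ⟨S', hS'sub, hBeq⟩ := hBsupp.1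
  obtain ⟨M₀, hM₀, hTeq⟩ := hT
  obtain ⟨j, hjJ, hj0⟩ := Submodule.exists_mem_ne_zero_of_ne_bot hJbot
  obtain ⟨d, hd0, hdI⟩ := hI.2
  -- Step 1 : replace `I` by `I' = I·B`, a fractional ideal of `B`.
  set I' : Submodule D K := I * Subalgebra.toSubmodule B with hI'def
  have hII' : I ≤ I' := le_mul_subalgebra I B
  have hI'T : I' * Subalgebra.toSubmodule T = J * Subalgebra.toSubmodule T := by
    rw [hI'def, mul_assoc, toSubmodule_mul_of_le hBT, hIJ]
  have hdI' : ∀ y ∈ I', d * y ∈ B := by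
    intro y hy
    refine Submodule.mul_induction_on hy ?_ ?_
    · intro i hi b hb
      have he : d * (i * b) = (d * i) * b := by ring
      rw [he]
      exact B.mul_mem (hAB (hdI i hi)) hb
    · intro y₁ y₂ h₁ h₂
      have he : d * (y₁ + y₂) = d * y₁ + d * y₂ := by ring
      rw [he]; exact B.add_mem h₁ h₂
  have hjB : Submodule.span D {j} * Subalgebra.toSubmodule B ≤ J := by
    refine Submodule.mul_le.mpr ?_
    intro a ha b hb
    obtain ⟨r, rfl⟩ := Submodule.mem_span_singleton.mp ha
    rw [smul_mul_assoc, mul_comm]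
    exact J.smul_mem r (hJ.1 b hb j hjJ)
  have hdmul : Submodule.span D {d} * I' ≤ Subalgebra.toSubmodule B := by
    refine Submodule.mul_le.mpr ?_
    intro a ha y hy
    obtain ⟨r, rfl⟩ := Submodule.mem_span_singleton.mp ha
    rw [smul_mul_assoc]
    exact B.smul_mem (hdI' y hy) r
  -- the "bound" c and a numerator α for it
  set c : K := j * d with hcdef
  have hc0 : c ≠ 0 := mul_ne_zero hj0 hd0
  obtain ⟨α, β, hβ, hαβ⟩ := IsFractionRing.div_surjective (A := D) c
  have hβ0 : β ≠ 0 := nonZeroDivisors.ne_zero hβ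
  have hβK : algebraMap D K β ≠ 0 := algebraMap_ne_zero hβ0
  have hα : algebraMap D K α = c * algebraMap D K β := by
    rw [← hαβ, div_mul_cancel₀ _ hβK]
  have hα0 : α ≠ 0 := by
    intro h
    rw [h, map_zero] at hα
    rcases mul_eq_zero.mp hα.symm with h' | h'
    · exact hc0 h'
    · exact hβK h'
  -- the correction module Λ
  set BadSet : Set (Submodule D K) :=
    {X | ∃ (N' : Ideal D) (hN' : N'.IsMaximal), ¬ Dependent D M₀ N' ∧
        B ≤ locAt D K N' hN'.isPrime ∧
        X = Submodule.span D {c} * Subalgebra.toSubmodule (locAt D K N' hN'.isPrime)}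
    with hBadSetdef
  set Λ : Submodule D K := (1 : Submodule D K) ⊓ sInf BadSet with hΛdef
  have hαΛ : algebraMap D K α ∈ Λ := by
    refine Submodule.mem_inf.mpr ⟨Submodule.mem_one.mpr ⟨α, rfl⟩, ?_⟩
    refine Submodule.mem_sInf.mpr ?_
    rintro X ⟨N', hN', hdep, hBle, rfl⟩
    rw [hα]
    exact Submodule.mul_mem_mul (Submodule.mem_span_singleton_self c)
      (show algebraMap D K β ∈ Subalgebra.toSubmodule (locAt D K N' hN'.isPrime) from
        Subalgebra.algebraMap_mem _ β)
  have hBadFin : BadSet.Finite := by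
    have himg : BadSet ⊆ (fun N' : Ideal D =>
        if h : N'.IsMaximal then
          Submodule.span D {c} * Subalgebra.toSubmodule (locAt D K N' h.isPrime)
        else ⊥) '' {I : Ideal D | I.IsMaximal} := by
      rintro X ⟨N', hN', hdep, hBle, rfl⟩
      exact ⟨N', hN', dif_pos hN'⟩
    exact (hsl.image _).subset himg
  -- elements of Λ avoiding a given maximal ideal dependent on M₀
  have hσ : ∀ (N : Ideal D), N.IsMaximal → Dependent D M₀ N →
      ∃ σ : D, σ ∉ N ∧ algebraMap D K σ ∈ Λ := by
    intro N hN hdepN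
    have h1 : ∀ X ∈ BadSet, ∃ sX : D, sX ∉ N ∧ algebraMap D K sX ∈ X := by
      rintro X ⟨N', hN', hnotdep, hBle, rfl⟩
      have hindep : ¬ Dependent D N N' :=
        indep_of_dep_notdep (K := K) hPruf hN.isPrime hdepN hnotdep
      have htop : Subalgebra.toSubmodule (locAt D K N' hN'.isPrime) *
          Subalgebra.toSubmodule (locAt D K N hN.isPrime) = ⊤ := by
        apply mulSubalg_eq_top
        intro P hP hP0 hinv
        refine hindep ⟨P, hP, hP0, ?_, ?_⟩
        · intro p hp
          by_contra hpN
          exact (hinv p hp (fun h0 => hpN (h0 ▸ N.zero_mem))).2 (inv_mem_locAt _ hpN)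
        · intro p hp
          by_contra hpN'
          exact (hinv p hp (fun h0 => hpN' (h0 ▸ N'.zero_mem))).1 (inv_mem_locAt _ hpN')
      have h1mem : (1 : K) ∈ (Submodule.span D {c} *
          Subalgebra.toSubmodule (locAt D K N' hN'.isPrime)) *
          Subalgebra.toSubmodule (locAt D K N hN.isPrime) := by
        rw [mul_assoc, htop]
        have he : (1 : K) = c * c⁻¹ := (mul_inv_cancel₀ hc0).symm
        rw [he]
        exact Submodule.mul_mem_mul (Submodule.mem_span_singleton_self c) Submodule.mem_top
      obtain ⟨sX, hsX, hmem⟩ := (mem_mul_locAt_iff hN.isPrime _).mp h1mem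
      exact ⟨sX, hsX, by simpa using hmem⟩
    set g : Submodule D K → D := fun X =>
      if h : ∃ sX : D, sX ∉ N ∧ algebraMap D K sX ∈ X then h.choose else 1 with hgdef
    set σ : D := ∏ X ∈ hBadFin.toFinset, g X with hσdef
    have hgprop : ∀ X ∈ hBadFin.toFinset, g X ∉ N ∧ algebraMap D K (g X) ∈ X := by
      intro X hX
      have hex := h1 X (hBadFin.mem_toFinset.mp hX)
      rw [hgdef]
      simp only [dif_pos hex]
      exact hex.choose_spec
    refine ⟨σ, ?_, ?_⟩
    · exact Finset.prod_induction g (· ∉ N)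
        (fun a b ha hb h => ((hN.isPrime.mem_or_mem h).elim ha hb))
        (fun h => hN.ne_top ((Ideal.eq_top_iff_one N).mpr h))
        (fun X hX => (hgprop X hX).1)
    · refine Submodule.mem_inf.mpr ⟨Submodule.mem_one.mpr ⟨σ, rfl⟩, Submodule.mem_sInf.mpr ?_⟩
      intro X hX
      have hXfin : X ∈ hBadFin.toFinset := hBadFin.mem_toFinset.mpr hX
      have hσeq : algebraMap D K σ
          = (∏ Y ∈ hBadFin.toFinset.erase X, g Y) • algebraMap D K (g X) := by
        rw [Algebra.smul_def, ← map_mul, hσdef]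
        congr 1
        rw [mul_comm]
        exact (Finset.mul_prod_erase _ _ hXfin).symm
      rw [hσeq]
      exact X.smul_mem _ (hgprop X hXfin).2
  -- choose the scaling element x
  set STset : Set (Ideal D) := {N | N.IsMaximal ∧ Dependent D M₀ N} with hSTdef
  have hSTfin : STset.Finite := hsl.subset (fun N hN => hN.1)
  set L : Ideal D := Λ.comap (Algebra.linearMap D K) with hLdef
  have hαL : α ∈ L := by
    show Algebra.linearMap D K α ∈ Λ
    simpa using hαΛ
  have hmaxchoice : ∃ x : D, x ∈ L ∧
      x ∉ ⋃ N ∈ ((insert ⊥ hSTfin.toFinset : Finset (Ideal D)) : Set (Ideal D)), (N : Set D) := by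
    by_contra hcon
    push_neg at hcon
    have hsub : (L : Set D) ⊆
        ⋃ N ∈ ((insert ⊥ hSTfin.toFinset : Finset (Ideal D)) : Set (Ideal D)), (N : Set D) :=
      fun x hx => hcon x hx
    have hprime : ∀ i ∈ (insert ⊥ hSTfin.toFinset : Finset (Ideal D)),
        i ≠ ⊥ → i ≠ ⊥ → i.IsPrime := by
      intro i hi _ _
      rcases Finset.mem_insert.mp hi with rfl | hi
      · exact Ideal.bot_prime
      · exact ((hSTfin.mem_toFinset.mp hi).1).isPrime
    obtain ⟨N, hNmem, hLN⟩ := (Ideal.subset_union_prime ⊥ ⊥ hprime).mp hsub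
    rcases Finset.mem_insert.mp hNmem with rfl | hNmem
    · exact hα0 (by simpa using hLN hαL)
    · obtain ⟨hNmax, hNdep⟩ := hSTfin.mem_toFinset.mp hNmem
      obtain ⟨σ, hσN, hσΛ⟩ := hσ N hNmax hNdep
      refine hσN (hLN ?_)
      show Algebra.linearMap D K σ ∈ Λ
      simpa using hσΛ
  obtain ⟨x, hxL, hxU⟩ := hmaxchoice
  have hx0 : x ≠ 0 := by
    intro h
    exact hxU (Set.mem_biUnion (Finset.mem_coe.mpr (Finset.mem_insert_self ⊥ _)) (by simp [h]))
  have hxN : ∀ N : Ideal D, N.IsMaximal → Dependent D M₀ N → x ∉ N := by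
    intro N hNm hNd hmem
    exact hxU (Set.mem_biUnion (Finset.mem_coe.mpr
      (Finset.mem_insert_of_mem (hSTfin.mem_toFinset.mpr ⟨hNm, hNd⟩))) hmem)
  have hxΛ : algebraMap D K x ∈ Λ := by
    have : Algebra.linearMap D K x ∈ Λ := hxL
    simpa using this
  set ξ : K := algebraMap D K x with hξdef
  have hξ0 : ξ ≠ 0 := algebraMap_ne_zero hx0
  have hξinvT : ξ⁻¹ ∈ T := by
    rw [hTeq]
    refine Algebra.mem_sInf.mpr ?_
    rintro A' ⟨N, hN, hdep, rfl⟩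
    exact inv_mem_locAt _ (hxN N hN hdep)
  -- local verification that ξ·I' ⊆ J
  have hloc : ∀ (N' : Ideal D) (hN' : N'.IsMaximal),
      Submodule.span D {ξ} * I' ≤ J * Subalgebra.toSubmodule (locAt D K N' hN'.isPrime) := by
    intro N' hN'
    by_cases hdepN' : Dependent D M₀ N'
    · -- class of T: there I'·D_{N'} = J·D_{N'}
      have hTle : T ≤ locAt D K N' hN'.isPrime := by
        rw [hTeq]
        exact sInf_le ⟨N', hN', hdepN', rfl⟩
      have hIJN : I' * Subalgebra.toSubmodule (locAt D K N' hN'.isPrime)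
          = J * Subalgebra.toSubmodule (locAt D K N' hN'.isPrime) := by
        rw [← toSubmodule_mul_of_le hTle, ← mul_assoc, hI'T, mul_assoc]
      calc Submodule.span D {ξ} * I' ≤ I' := span_algebraMap_mul_le x I'
        _ ≤ I' * Subalgebra.toSubmodule (locAt D K N' hN'.isPrime) := le_mul_subalgebra _ _
        _ = J * Subalgebra.toSubmodule (locAt D K N' hN'.isPrime) := hIJN
    · by_cases hBle : B ≤ locAt D K N' hN'.isPrime
      · -- `N'` in a class of `S'`, not of `T`: here ξ is "small enough"
        have hXmem : (Submodule.span D {c} *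
            Subalgebra.toSubmodule (locAt D K N' hN'.isPrime)) ∈ BadSet :=
          ⟨N', hN', hdepN', hBle, rfl⟩
        have hξX : ξ ∈ Submodule.span D {c} *
            Subalgebra.toSubmodule (locAt D K N' hN'.isPrime) :=
          Submodule.mem_sInf.mp (Submodule.mem_inf.mp hxΛ).2 _ hXmem
        have hspanle : Submodule.span D {ξ} ≤ Submodule.span D {c} *
            Subalgebra.toSubmodule (locAt D K N' hN'.isPrime) :=
          Submodule.span_le.mpr (Set.singleton_subset_iff.mpr hξX)
        have hspan_cjd : Submodule.span D {c}
            = Submodule.span D {j} * Submodule.span D {d} := by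
          rw [hcdef, Submodule.span_mul_span, Set.singleton_mul_singleton]
        calc Submodule.span D {ξ} * I'
            ≤ (Submodule.span D {c} *
                Subalgebra.toSubmodule (locAt D K N' hN'.isPrime)) * I' :=
              mul_le_mul' hspanle le_rfl
          _ = (Submodule.span D {j} * (Submodule.span D {d} * I')) *
                Subalgebra.toSubmodule (locAt D K N' hN'.isPrime) := by
              rw [hspan_cjd]; ring
          _ ≤ (Submodule.span D {j} * Subalgebra.toSubmodule B) *
                Subalgebra.toSubmodule (locAt D K N' hN'.isPrime) :=
              mul_le_mul' (mul_le_mul' le_rfl hdmul) le_rfl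
          _ ≤ J * Subalgebra.toSubmodule (locAt D K N' hN'.isPrime) :=
              mul_le_mul' hjB le_rfl
      · -- `N'` outside all classes of `S'`: there `B·D_{N'} = K`
        have htop : Subalgebra.toSubmodule B *
            Subalgebra.toSubmodule (locAt D K N' hN'.isPrime) = ⊤ := by
          apply mulSubalg_eq_top
          intro P hP hP0 hinv
          have hPN' : P ≤ N' := by
            intro p hp
            by_contra hpN
            have hp0 : p ≠ 0 := fun h0 => hpN (h0 ▸ N'.zero_mem)
            exact (hinv p hp hp0).2 (inv_mem_locAt _ hpN)
          set RelN : Set (Ideal D) := {Nr | Nr.IsMaximal ∧ ∃ M'' : Ideal D,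
              M''.IsMaximal ∧ TOf D K M'' ∈ S' ∧ Dependent D M'' Nr} with hRelNdef
          have hRelfin : RelN.Finite := hsl.subset fun Nr h => h.1
          have hprime2 : ∀ i ∈ (insert ⊥ hRelfin.toFinset : Finset (Ideal D)),
              i ≠ ⊥ → i ≠ ⊥ → i.IsPrime := by
            intro i hi _ _
            rcases Finset.mem_insert.mp hi with rfl | hi
            · exact Ideal.bot_prime
            · exact ((hRelfin.mem_toFinset.mp hi).1).isPrime
          have hPsub : (P : Set D) ⊆
              ⋃ Nr ∈ ((insert ⊥ hRelfin.toFinset : Finset (Ideal D)) : Set (Ideal D)),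
                (Nr : Set D) := by
            intro p hp
            by_cases hp0 : p = 0
            · exact Set.mem_biUnion (Finset.mem_coe.mpr (Finset.mem_insert_self _ _))
                (by simp [hp0])
            · have hnotB : (algebraMap D K p)⁻¹ ∉ B := (hinv p hp hp0).1
              have hex : ∃ T' ∈ S', (algebraMap D K p)⁻¹ ∉ T' := by
                by_contra hall
                push_neg at hall
                rw [hBeq] at hnotB
                exact hnotB (Algebra.mem_sInf.mpr hall)
              obtain ⟨T', hT'S, hnotT'⟩ := hex
              obtain ⟨M'', hM'', hT'eq⟩ := hS'sub hT'S
              have hex2 : ∃ (Nr : Ideal D) (hNr : Nr.IsMaximal), Dependent D M'' Nr ∧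
                  (algebraMap D K p)⁻¹ ∉ locAt D K Nr hNr.isPrime := by
                by_contra hall
                push_neg at hall
                refine hnotT' ?_
                rw [hT'eq]
                refine Algebra.mem_sInf.mpr ?_
                rintro A' ⟨Nr, hNr, hdep, rfl⟩
                exact hall Nr hNr hdep
              obtain ⟨Nr, hNr, hdepr, hnotloc⟩ := hex2
              have hpNr : p ∈ Nr := by
                by_contra hpn
                exact hnotloc (inv_mem_locAt _ hpn)
              exact Set.mem_biUnion (Finset.mem_coe.mpr (Finset.mem_insert_of_mem
                (hRelfin.mem_toFinset.mpr ⟨hNr, M'', hM'', hT'eq ▸ hT'S, hdepr⟩))) hpNr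
          obtain ⟨Nr, hNrmem, hPNr⟩ := (Ideal.subset_union_prime ⊥ ⊥ hprime2).mp hPsub
          rcases Finset.mem_insert.mp hNrmem with rfl | hNrmem
          · exact hP0 (le_bot_iff.mp hPNr)
          · obtain ⟨hNrmax, M'', hM''max, hT'S, hdepr⟩ := hRelfin.mem_toFinset.mp hNrmem
            obtain ⟨Q, hQ, hQ0, hQM, hQNr⟩ := hdepr
            have hdepM''N' : Dependent D M'' N' := by
              rcases primes_comparable (K := K) hPruf hNrmax.isPrime hP hQ hPNr hQNr with
                hcomp | hcomp
              · exact ⟨P, hP, hP0, hcomp.trans hQM, hPN'⟩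
              · exact ⟨Q, hQ, hQ0, hQM, hcomp.trans hPN'⟩
            have hTOfle : TOf D K M'' ≤ locAt D K N' hN'.isPrime :=
              sInf_le ⟨N', hN', hdepM''N', rfl⟩
            refine hBle ?_
            rw [hBeq]
            exact le_trans (sInf_le hT'S) hTOfle
        have hJtop : J * Subalgebra.toSubmodule (locAt D K N' hN'.isPrime) = ⊤ := by
          rw [eq_top_iff]
          calc (⊤ : Submodule D K) = Submodule.span D {j} * ⊤ :=
              (span_singleton_mul_top hj0).symm
            _ = Submodule.span D {j} * (Subalgebra.toSubmodule B *
                  Subalgebra.toSubmodule (locAt D K N' hN'.isPrime)) := by rw [htop]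
            _ = (Submodule.span D {j} * Subalgebra.toSubmodule B) *
                  Subalgebra.toSubmodule (locAt D K N' hN'.isPrime) := (mul_assoc _ _ _).symm
            _ ≤ J * Subalgebra.toSubmodule (locAt D K N' hN'.isPrime) :=
              mul_le_mul' hjB le_rfl
        rw [hJtop]
        exact le_top
  have hmain : Submodule.span D {ξ} * I' ≤ J := by
    intro y hy
    exact mem_of_forall_locAt (fun N' hN' => hloc N' hN' hy)
  -- apply the semistar operation
  have hsmul := s.smul' ξ hξ0 I'
  have hstar : Submodule.span D {ξ} * s.toFun I' ≤ s.toFun J := by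
    rw [← hsmul]
    exact s.mono' hmain
  have hspanInv : Submodule.span D {ξ⁻¹} ≤ Subalgebra.toSubmodule T :=
    Submodule.span_le.mpr (Set.singleton_subset_iff.mpr hξinvT)
  have honemul : Submodule.span D {ξ⁻¹} * Submodule.span D {ξ} = 1 := by
    rw [Submodule.span_mul_span, Set.singleton_mul_singleton, inv_mul_cancel₀ hξ0,
      ← Submodule.one_eq_span]
  calc s.toFun I * Subalgebra.toSubmodule T
      ≤ s.toFun I' * Subalgebra.toSubmodule T := mul_le_mul' (s.mono' hII') le_rfl
    _ = (Submodule.span D {ξ⁻¹} * Submodule.span D {ξ}) *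
          (s.toFun I' * Subalgebra.toSubmodule T) := by rw [honemul, one_mul]
    _ = Submodule.span D {ξ⁻¹} * ((Submodule.span D {ξ} * s.toFun I') *
          Subalgebra.toSubmodule T) := by rw [mul_assoc, mul_assoc]
    _ ≤ Submodule.span D {ξ⁻¹} * (s.toFun J * Subalgebra.toSubmodule T) :=
        mul_le_mul' le_rfl (mul_le_mul' hstar le_rfl)
    _ ≤ Subalgebra.toSubmodule T * (s.toFun J * Subalgebra.toSubmodule T) :=
        mul_le_mul' hspanInv le_rfl
    _ = s.toFun J * (Subalgebra.toSubmodule T * Subalgebra.toSubmodule T) := by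
        rw [← mul_assoc, mul_comm (Subalgebra.toSubmodule T) (s.toFun J), mul_assoc]
    _ = s.toFun J * Subalgebra.toSubmodule T := by rw [(Subalgebra.isIdempotentElem_toSubmodule _).eq]

end Paper
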